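/- If X is a topological space whose Urysohn number U(X) is finite (equivalently, nu(X) is finite), then |X| ≤ 2^{κ(X)·aL(X)}. -/

import Mathlib

open Set Topology Cardinal

universe u

variable {X : Type u}

/-- The θ-closure of a set. -/
def thetaCl [TopologicalSpace X] (A : Set X) : Set X :=
  {x | ∀ U : Set X, IsOpen U → x ∈ U → (closure U ∩ A).Nonempty}

/-- The θ-closed hull of a set. -/
def thetaHull [TopologicalSpace X] (A : Set X) : Set X :=
  ⋂₀ {C : Set X | thetaCl C = C ∧ A ⊆ C}

/-- A nonempty set is finitely non-Urysohn if every finite choice of closed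
neighborhoods (closures of open neighborhoods) of finitely many of its points
has nonempty intersection. -/
def FinNonUrysohn [TopologicalSpace X] (A : Set X) : Prop :=
  A.Nonempty ∧ ∀ F : Set X, F ⊆ A → F.Nonempty → F.Finite →
    ∀ U : X → Set X, (∀ x ∈ F, IsOpen (U x) ∧ x ∈ U x) →
      (⋂ x ∈ F, closure (U x)).Nonempty

/-- The non-Urysohn number `nu(X)`. -/
noncomputable def nuNumber (X : Type u) [TopologicalSpace X] : Cardinal.{u} :=
  1 + ⨆ A : {A : Set X // FinNonUrysohn A}, #↥A.1

/-- The Urysohn number `U(X)`. -/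
noncomputable def UrysohnNumber (X : Type u) [TopologicalSpace X] : Cardinal.{u} :=
  sInf {κ : Cardinal.{u} | ∀ A : Set X, κ ≤ #↥A → ∃ U : X → Set X,
    (∀ a ∈ A, IsOpen (U a) ∧ a ∈ U a) ∧ (⋂ a ∈ A, closure (U a)) = ∅}

/-- The cardinal function `κ(X)`: the smallest infinite cardinal such that each
point has a family of at most that many closed neighborhoods cofinal (under
reverse inclusion) in the closures of its open neighborhoods. -/
noncomputable def kappaInv (X : Type u) [TopologicalSpace X] : Cardinal.{u} :=
  sInf {κ : Cardinal.{u} | ℵ₀ ≤ κ ∧ ∀ x : X, ∃ V : Set (Set X), #↥V ≤ κ ∧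
    (∀ W ∈ V, IsClosed W ∧ W ∈ nhds x) ∧
    ∀ U : Set X, IsOpen U → x ∈ U → ∃ W ∈ V, W ⊆ closure U}

/-- The character `χ(X)`. -/
noncomputable def chiChar (X : Type u) [TopologicalSpace X] : Cardinal.{u} :=
  sInf {κ : Cardinal.{u} | ℵ₀ ≤ κ ∧ ∀ x : X, ∃ B : Set (Set X), #↥B ≤ κ ∧
    (∀ U ∈ B, U ∈ nhds x) ∧ ∀ S ∈ nhds x, ∃ U ∈ B, U ⊆ S}

/-- The θ-density `d_θ(X)`. -/
noncomputable def dTheta (X : Type u) [TopologicalSpace X] : Cardinal.{u} :=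
  sInf {c : Cardinal.{u} | ∃ A : Set X, thetaCl A = Set.univ ∧ #↥A = c}

/-- The cardinal function `sL_θ(X)`. -/
noncomputable def sLtheta (X : Type u) [TopologicalSpace X] : Cardinal.{u} :=
  sInf {τ : Cardinal.{u} | ℵ₀ ≤ τ ∧ ∀ A : Set X, ∀ 𝒰 : Set (Set X),
    (∀ U ∈ 𝒰, IsOpen U) → thetaCl A ⊆ ⋃₀ 𝒰 →
    ∃ 𝒱 ⊆ 𝒰, #↥𝒱 ≤ τ ∧ A ⊆ closure (⋃₀ 𝒱)}

/-- The cardinal function `wL_c(X)`. -/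
noncomputable def wLc (X : Type u) [TopologicalSpace X] : Cardinal.{u} :=
  sInf {τ : Cardinal.{u} | ℵ₀ ≤ τ ∧ ∀ A : Set X, IsClosed A → ∀ 𝒰 : Set (Set X),
    (∀ U ∈ 𝒰, IsOpen U) → A ⊆ ⋃₀ 𝒰 →
    ∃ 𝒱 ⊆ 𝒰, #↥𝒱 ≤ τ ∧ A ⊆ closure (⋃₀ 𝒱)}

/-- The almost Lindelöf degree `aL(X)`. -/
noncomputable def aLdeg (X : Type u) [TopologicalSpace X] : Cardinal.{u} :=
  sInf {τ : Cardinal.{u} | ℵ₀ ≤ τ ∧ ∀ 𝒰 : Set (Set X),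
    (∀ U ∈ 𝒰, IsOpen U) → ⋃₀ 𝒰 = Set.univ →
    ∃ 𝒱 ⊆ 𝒰, #↥𝒱 ≤ τ ∧ (⋃ V ∈ 𝒱, closure V) = Set.univ}

/-- `X` is a Urysohn space: distinct points have open neighborhoods with
disjoint closures. -/
def UrysohnSpace (X : Type u) [TopologicalSpace X] : Prop :=
  ∀ x y : X, x ≠ y → ∃ U V : Set X, IsOpen U ∧ IsOpen V ∧ x ∈ U ∧ y ∈ V ∧
    closure U ∩ closure V = ∅

/-- For a set `S`, the intersection over all choices of closed neighborhoods of
the points of `S` of the θ-closures of the intersections of the choices. -/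
def capSet [TopologicalSpace X] (S : Set X) : Set X :=
  {y | ∀ U : X → Set X, (∀ a ∈ S, IsOpen (U a) ∧ a ∈ U a) →
    y ∈ thetaCl (⋂ a ∈ S, closure (U a))}

/-- For a set `M`, the intersection over all nonempty finite `F ⊆ M` and all
choices of open neighborhoods of points of `F` of
`cl_θ(⋂_{x∈F} closure (U x))`. -/
def fnuCap [TopologicalSpace X] (M : Set X) : Set X :=
  {y | ∀ F : Set X, F ⊆ M → F.Nonempty → F.Finite → ∀ U : X → Set X,
    (∀ x ∈ F, IsOpen (U x) ∧ x ∈ U x) →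
    y ∈ thetaCl (⋂ x ∈ F, closure (U x))}

/-! ### Auxiliary development for statement13 -/

section AuxDev

variable [TopologicalSpace X]

lemma thetaCl_mono' {A B : Set X} (h : A ⊆ B) : thetaCl A ⊆ thetaCl B := by
  intro x hx U hU hxU
  exact (hx U hU hxU).mono (inter_subset_inter_right _ h)

lemma subset_thetaCl' (A : Set X) : A ⊆ thetaCl A := by
  intro a ha U hU haU
  exact ⟨a, subset_closure haU, ha⟩

lemma thetaCl_symm' {x q : X} (h : x ∈ thetaCl ({q} : Set X)) :
    q ∈ thetaCl ({x} : Set X) := by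
  intro G hG hqG
  rw [Set.inter_singleton_nonempty, mem_closure_iff]
  intro U hU hxU
  have h1 : (closure U ∩ ({q} : Set X)).Nonempty := h U hU hxU
  rw [Set.inter_singleton_nonempty, mem_closure_iff] at h1
  rw [inter_comm]
  exact h1 G hG hqG

/-- Bundled hypotheses for the main construction. -/
structure Setup (X : Type u) [TopologicalSpace X] (κ : Cardinal.{u}) (n : ℕ)
    (D : X → Set (Set X)) : Prop where
  hκ : ℵ₀ ≤ κ
  hn : 1 ≤ n
  hU : ∀ A : Set X, (n : Cardinal.{u}) ≤ #A → ∃ U : X → Set X,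
        (∀ a ∈ A, IsOpen (U a) ∧ a ∈ U a) ∧ (⋂ a ∈ A, closure (U a)) = ∅
  hD1 : ∀ x, #(D x) ≤ κ
  hD2 : ∀ x, ∀ W ∈ D x, IsClosed W ∧ W ∈ nhds x
  hD3 : ∀ x, ∀ U : Set X, IsOpen U → x ∈ U → ∃ W ∈ D x, W ⊆ closure U
  hD4 : ∀ x, ∀ W1 ∈ D x, ∀ W2 ∈ D x, ∃ W3 ∈ D x, W3 ⊆ W1 ∩ W2
  haL : ∀ 𝒰 : Set (Set X), (∀ U ∈ 𝒰, IsOpen U) → ⋃₀ 𝒰 = Set.univ →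
        ∃ 𝒱 ⊆ 𝒰, #𝒱 ≤ κ ∧ (⋃ V ∈ 𝒱, closure V) = Set.univ

namespace Setup

variable {κ : Cardinal.{u}} {n : ℕ} {D : X → Set (Set X)}

lemma aleph0_le_two_power (S : Setup X κ n D) : ℵ₀ ≤ (2:Cardinal.{u}) ^ κ :=
  S.hκ.trans (cantor κ).le

lemma two_power_power (S : Setup X κ n D) : ((2:Cardinal.{u}) ^ κ) ^ κ = (2:Cardinal.{u}) ^ κ := by
  rw [← Cardinal.power_mul, Cardinal.mul_eq_self S.hκ]

lemma two_power_mul_self (S : Setup X κ n D) : (2:Cardinal.{u}) ^ κ * (2:Cardinal.{u}) ^ κ = (2:Cardinal.{u}) ^ κ :=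
  Cardinal.mul_eq_self S.aleph0_le_two_power

lemma mem_thetaCl_iff (S : Setup X κ n D) {A : Set X} {x : X} :
    x ∈ thetaCl A ↔ ∀ W ∈ D x, (W ∩ A).Nonempty := by
  constructor
  · intro hx W hW
    have h1 : IsOpen (interior W) := isOpen_interior
    have h2 : x ∈ interior W := mem_interior_iff_mem_nhds.mpr (S.hD2 x W hW).2
    have h3 := hx _ h1 h2
    refine h3.mono (inter_subset_inter_left _ ?_)
    have := (S.hD2 x W hW).1.closure_eq
    calc closure (interior W) ⊆ closure W := closure_mono interior_subset
      _ = W := this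
  · intro hx U hU hxU
    obtain ⟨W, hWD, hWsub⟩ := S.hD3 x U hU hxU
    exact (hx W hWD).mono (inter_subset_inter_left _ hWsub)

lemma dir_finite (S : Setup X κ n D) (x : X) :
    ∀ 𝒮 : Set (Set X), 𝒮.Finite → 𝒮 ⊆ D x → ∃ W ∈ D x, W ⊆ ⋂₀ 𝒮 := by
  intro 𝒮 h𝒮
  refine Set.Finite.induction_on
    (motive := fun 𝒮 _ => 𝒮 ⊆ D x → ∃ W ∈ D x, W ⊆ ⋂₀ 𝒮) 𝒮 h𝒮 ?_ ?_
  · intro _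
    obtain ⟨W, hW, -⟩ := S.hD3 x Set.univ isOpen_univ (Set.mem_univ x)
    exact ⟨W, hW, by simp⟩
  · intro a s _ _ ih hsub
    obtain ⟨W, hW, hWsub⟩ := ih (fun t ht => hsub (Set.mem_insert_of_mem _ ht))
    have ha : a ∈ D x := hsub (Set.mem_insert _ _)
    obtain ⟨W3, hW3, hW3sub⟩ := S.hD4 x a ha W hW
    refine ⟨W3, hW3, ?_⟩
    rw [Set.sInter_insert]
    exact hW3sub.trans (inter_subset_inter_right _ hWsub)


lemma mk_thetaCl_small (S : Setup X κ n D) {B : Set X} (hB : #B ≤ κ) :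
    #(thetaCl B) ≤ (2:Cardinal.{u}) ^ κ := by
  classical
  set G : X → Set (Set X) := fun x => (fun W => W ∩ B) '' D x with hGdef
  -- each fiber of G on thetaCl B has fewer than n elements
  have fib : ∀ 𝒢 : Set (Set X),
      ¬ ((n : Cardinal.{u}) ≤ #({x ∈ thetaCl B | G x = 𝒢} : Set X)) := by
    intro 𝒢 hle
    obtain ⟨A, hAsub, hAcard⟩ := Cardinal.le_mk_iff_exists_subset.mp hle
    have hAfin : A.Finite := by
      rw [← Cardinal.lt_aleph0_iff_set_finite, hAcard]
      exact nat_lt_aleph0 n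
    have hAne : A.Nonempty := by
      rcases Set.eq_empty_or_nonempty A with rfl | h
      · exfalso
        rw [Cardinal.mk_emptyCollection] at hAcard
        have hn1 := S.hn
        have : (n:Cardinal.{u}) ≠ 0 := by
          simp only [ne_eq, Nat.cast_eq_zero]
          omega
        exact this hAcard.symm
      · exact h
    obtain ⟨U, hU1, hU2⟩ := S.hU A (by rw [hAcard])
    have hWex : ∀ a : A, ∃ W ∈ D a.1, W ⊆ closure (U a.1) := fun a =>
      S.hD3 a.1 (U a.1) (hU1 a.1 a.2).1 (hU1 a.1 a.2).2
    choose W hW1 hW2 using hWex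
    have hAfib : ∀ a : A, a.1 ∈ thetaCl B ∧ G a.1 = 𝒢 := fun a => hAsub a.2
    obtain ⟨x₀, hx₀A⟩ := hAne
    have hx₀theta : x₀ ∈ thetaCl B := (hAfib ⟨x₀, hx₀A⟩).1
    have hx₀G : G x₀ = 𝒢 := (hAfib ⟨x₀, hx₀A⟩).2
    -- the finite family {W a ∩ B} lies in G x₀
    have hmem : ∀ a : A, W a ∩ B ∈ G x₀ := by
      intro a
      have : W a ∩ B ∈ G a.1 := ⟨W a, hW1 a, rfl⟩
      rw [(hAfib a).2, ← hx₀G] at this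
      exact this
    -- find elements of D x₀ realizing them, and a common lower bound
    have hVex : ∀ a : A, ∃ V ∈ D x₀, V ∩ B = W a ∩ B := by
      intro a
      obtain ⟨V, hV, hVeq⟩ := hmem a
      exact ⟨V, hV, hVeq⟩
    choose V hV1 hV2 using hVex
    have hfinV : (Set.range V).Finite := by
      have : Finite A := hAfin.to_subtype
      exact Set.finite_range V
    obtain ⟨W₀, hW₀D, hW₀sub⟩ := S.dir_finite x₀ (Set.range V) hfinV
      (by rintro _ ⟨a, rfl⟩; exact hV1 a)
    have hW₀B : (W₀ ∩ B).Nonempty := (S.mem_thetaCl_iff.mp hx₀theta) W₀ hW₀D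
    obtain ⟨y, hyW₀, hyB⟩ := hW₀B
    have hy : y ∈ ⋂ a ∈ A, closure (U a) := by
      refine Set.mem_biInter ?_
      intro a ha
      have h1 : W₀ ⊆ V ⟨a, ha⟩ := fun z hz => hW₀sub hz _ ⟨⟨a, ha⟩, rfl⟩
      have h2 : y ∈ V ⟨a, ha⟩ ∩ B := ⟨h1 hyW₀, hyB⟩
      rw [hV2 ⟨a, ha⟩] at h2
      exact hW2 ⟨a, ha⟩ h2.1
    rw [hU2] at hy
    exact hy
  -- counting
  have cover : thetaCl B = ⋃ 𝒢 ∈ G '' thetaCl B, {x ∈ thetaCl B | G x = 𝒢} := by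
    ext x
    simp only [Set.mem_iUnion, Set.mem_setOf_eq, exists_prop, Set.mem_image]
    constructor
    · intro hx
      exact ⟨G x, ⟨x, hx, rfl⟩, hx, rfl⟩
    · rintro ⟨𝒢, -, hx, -⟩
      exact hx
  have step1 : #(thetaCl B) ≤ #(G '' thetaCl B) * (n : Cardinal.{u}) := by
    refine (mk_le_mk_of_subset cover.subset).trans ?_
    refine (mk_biUnion_le _ _).trans ?_
    refine mul_le_mul_right ?_ _
    refine ciSup_le' ?_
    intro 𝒢
    exact le_of_not_ge (fib 𝒢.1)
  have step2 : #(G '' thetaCl B) ≤ (2:Cardinal.{u}) ^ κ := by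
    have himg : ∀ 𝒢 : (G '' thetaCl B : Set (Set (Set X))),
        𝒢.1 ⊆ 𝒫 B ∧ #𝒢.1 ≤ κ := by
      rintro ⟨_, x, -, rfl⟩
      constructor
      · rintro _ ⟨W, -, rfl⟩
        exact Set.inter_subset_right
      · exact mk_image_le.trans (S.hD1 x)
    have hinj : #(G '' thetaCl B) ≤ #{t : Set (Set X) // t ⊆ 𝒫 B ∧ #t ≤ κ} := by
      refine mk_le_of_injective (f := fun 𝒢 => ⟨𝒢.1, himg 𝒢⟩) ?_
      intro a b hab
      apply Subtype.ext
      simpa using hab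
    refine hinj.trans ((mk_bounded_subset_le _ _).trans ?_)
    have hmax : max #(𝒫 B : Set (Set X)) ℵ₀ ≤ (2:Cardinal.{u}) ^ κ := by
      refine max_le ?_ S.aleph0_le_two_power
      rw [mk_powerset]
      exact power_le_power_left two_ne_zero hB
    exact (power_le_power_right hmax).trans S.two_power_power.le
  refine step1.trans ?_
  have hn2 : (n : Cardinal.{u}) ≤ (2:Cardinal.{u}) ^ κ :=
    (nat_lt_aleph0 n).le.trans S.aleph0_le_two_power
  exact (mul_le_mul' step2 hn2).trans S.two_power_mul_self.le


lemma mk_thetaCl_le (S : Setup X κ n D) {A : Set X} (hA : #A ≤ (2:Cardinal.{u}) ^ κ) :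
    #(thetaCl A) ≤ (2:Cardinal.{u}) ^ κ := by
  classical
  set SB : Set (Set X) := {B | B ⊆ A ∧ #B ≤ κ} with hSB
  have cover : thetaCl A ⊆ ⋃ B ∈ SB, thetaCl B := by
    intro x hx
    have hmeet : ∀ W : D x, (W.1 ∩ A).Nonempty :=
      fun W => S.mem_thetaCl_iff.mp hx W.1 W.2
    choose f hf1 hf2 using hmeet
    set B : Set X := Set.range f with hBdef
    have hBsub : B ⊆ A := by rintro _ ⟨W, rfl⟩; exact hf2 W
    have hBcard : #B ≤ κ := mk_range_le.trans (S.hD1 x)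
    have hxB : x ∈ thetaCl B := by
      rw [S.mem_thetaCl_iff]
      intro W hW
      exact ⟨f ⟨W, hW⟩, hf1 ⟨W, hW⟩, ⟨W, hW⟩, rfl⟩
    exact Set.mem_biUnion (⟨hBsub, hBcard⟩ : B ∈ SB) hxB
  refine (mk_le_mk_of_subset cover).trans ?_
  refine (mk_biUnion_le _ _).trans ?_
  have h1 : #SB ≤ (2:Cardinal.{u}) ^ κ := by
    have : #SB ≤ #{t : Set X // t ⊆ A ∧ #t ≤ κ} := le_of_eq rfl
    refine this.trans ((mk_bounded_subset_le _ _).trans ?_)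
    have hmax : max #A ℵ₀ ≤ (2:Cardinal.{u}) ^ κ := max_le hA S.aleph0_le_two_power
    exact (power_le_power_right hmax).trans S.two_power_power.le
  have h2 : ⨆ B : SB, #(thetaCl B.1) ≤ (2:Cardinal.{u}) ^ κ :=
    ciSup_le' fun B => S.mk_thetaCl_small B.2.2
  exact (mul_le_mul' h1 h2).trans S.two_power_mul_self.le

end Setup

open Classical in
noncomputable def wit (x₀ : X) (𝒲 : Set (Set X)) : X :=
  if h : ((⋃₀ 𝒲)ᶜ : Set X).Nonempty then h.choose else x₀

lemma wit_spec (x₀ : X) {𝒲 : Set (Set X)} (h : ⋃₀ 𝒲 ≠ Set.univ) :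
    wit x₀ 𝒲 ∉ ⋃₀ 𝒲 := by
  have h' : ((⋃₀ 𝒲)ᶜ : Set X).Nonempty := by rwa [Set.nonempty_compl]
  rw [wit]
  rw [dif_pos h']
  exact h'.choose_spec

noncomputable def Phi (D : X → Set (Set X)) (κ : Cardinal.{u}) (x₀ : X) (A : Set X) :
    Set X :=
  A ∪ thetaCl A ∪ (wit x₀) '' {𝒲 : Set (Set X) | 𝒲 ⊆ (⋃ x ∈ A, D x) ∧ #𝒲 ≤ κ}

noncomputable def Hseq (D : X → Set (Set X)) (κ : Cardinal.{u}) (x₀ : X) :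
    Ordinal.{u} → Set X :=
  Ordinal.lt_wf.fix (fun o ih => Phi D κ x₀ (⋃ o' : Set.Iio o, ih o'.1 o'.2))

lemma Hseq_eq (D : X → Set (Set X)) (κ : Cardinal.{u}) (x₀ : X) (o : Ordinal.{u}) :
    Hseq D κ x₀ o = Phi D κ x₀ (⋃ o' : Set.Iio o, Hseq D κ x₀ o'.1) :=
  Ordinal.lt_wf.fix_eq _ o

lemma Hseq_mono (D : X → Set (Set X)) (κ : Cardinal.{u}) (x₀ : X)
    {o' o : Ordinal.{u}} (h : o' ≤ o) : Hseq D κ x₀ o' ⊆ Hseq D κ x₀ o := by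
  rcases eq_or_lt_of_le h with rfl | h
  · exact subset_rfl
  · rw [Hseq_eq D κ x₀ o]
    intro z hz
    exact Set.mem_union_left _ (Set.mem_union_left _
      (Set.mem_iUnion.mpr ⟨⟨o', h⟩, hz⟩))

lemma mk_iUnion_Iio_le {f : Ordinal.{u} → Set X} {o : Ordinal.{u}} {c : Cardinal.{u}}
    (hf : ∀ o' < o, #(f o') ≤ c) :
    #(⋃ o' : Set.Iio o, f o'.1) ≤ o.card * c := by
  have h := mk_iUnion_le_lift (α := X) (ι := Set.Iio o) (fun o' => f o'.1)
  rw [Ordinal.mk_Iio_ordinal, Cardinal.lift_lift] at h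
  have h2 : (⨆ o' : Set.Iio o, Cardinal.lift.{u+1} #(f o'.1)) ≤ Cardinal.lift.{u+1} c :=
    ciSup_le' fun o' => Cardinal.lift_le.mpr (hf o'.1 o'.2)
  have h3 : Cardinal.lift.{u+1} #(⋃ o' : Set.Iio o, f o'.1) ≤
      Cardinal.lift.{u+1} (o.card * c) := by
    rw [Cardinal.lift_mul]
    exact h.trans (mul_le_mul_right h2 _)
  exact Cardinal.lift_le.mp h3

namespace Setup

variable {κ : Cardinal.{u}} {n : ℕ} {D : X → Set (Set X)}

lemma mk_Hseq_le (S : Setup X κ n D) (x₀ : X) :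
    ∀ o : Ordinal.{u}, o.card ≤ κ → #(Hseq D κ x₀ o) ≤ (2:Cardinal.{u}) ^ κ := by
  intro o
  induction o using Ordinal.induction with
  | h o ih =>
  intro ho
  rw [Hseq_eq]
  set A := ⋃ o' : Set.Iio o, Hseq D κ x₀ o'.1 with hAdef
  have hAcard : #A ≤ (2:Cardinal.{u}) ^ κ := by
    refine (mk_iUnion_Iio_le (c := (2:Cardinal.{u})^κ) ?_).trans ?_
    · exact fun o' ho' => ih o' ho' ((Ordinal.card_le_card ho'.le).trans ho)
    · calc o.card * (2:Cardinal.{u})^κ ≤ (2:Cardinal.{u})^κ * (2:Cardinal.{u})^κ :=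
        mul_le_mul' (ho.trans (cantor κ).le) le_rfl
      _ = (2:Cardinal.{u})^κ := S.two_power_mul_self
  have hT : #(⋃ x ∈ A, D x) ≤ (2:Cardinal.{u}) ^ κ := by
    refine (mk_biUnion_le _ _).trans ?_
    have h1 : (⨆ x : A, #(D x.1)) ≤ κ := ciSup_le' fun x => S.hD1 x.1
    calc #A * ⨆ x : A, #(D x.1) ≤ (2:Cardinal.{u})^κ * κ :=
        mul_le_mul' hAcard h1
      _ ≤ (2:Cardinal.{u})^κ * (2:Cardinal.{u})^κ := mul_le_mul' le_rfl (cantor κ).le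
      _ = (2:Cardinal.{u})^κ := S.two_power_mul_self
  have himg : #((wit x₀) '' {𝒲 : Set (Set X) | 𝒲 ⊆ (⋃ x ∈ A, D x) ∧ #𝒲 ≤ κ}) ≤
      (2:Cardinal.{u}) ^ κ := by
    refine mk_image_le.trans ?_
    have : #({𝒲 : Set (Set X) | 𝒲 ⊆ (⋃ x ∈ A, D x) ∧ #𝒲 ≤ κ}) ≤
        #{t : Set (Set X) // t ⊆ (⋃ x ∈ A, D x) ∧ #t ≤ κ} := le_of_eq rfl
    refine this.trans ((mk_bounded_subset_le _ _).trans ?_)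
    have hmax : max #(⋃ x ∈ A, D x) ℵ₀ ≤ (2:Cardinal.{u}) ^ κ :=
      max_le hT S.aleph0_le_two_power
    exact (power_le_power_right hmax).trans S.two_power_power.le
  rw [Phi]
  refine (mk_union_le _ _).trans ?_
  refine Cardinal.add_le_of_le S.aleph0_le_two_power ((mk_union_le _ _).trans ?_) himg
  exact Cardinal.add_le_of_le S.aleph0_le_two_power hAcard (S.mk_thetaCl_le hAcard)

end Setup

noncomputable def BigH (D : X → Set (Set X)) (κ : Cardinal.{u}) (x₀ : X) : Set X :=
  ⋃ o : Set.Iio (Order.succ κ).ord, Hseq D κ x₀ o.1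

namespace Setup

variable {κ : Cardinal.{u}} {n : ℕ} {D : X → Set (Set X)}

lemma mk_BigH_le (S : Setup X κ n D) (x₀ : X) :
    #(BigH D κ x₀) ≤ (2:Cardinal.{u}) ^ κ := by
  rw [BigH]
  refine (mk_iUnion_Iio_le (c := (2:Cardinal.{u})^κ) ?_).trans ?_
  · intro o' ho'
    refine S.mk_Hseq_le x₀ o' ?_
    have := Cardinal.lt_ord.mp ho'
    exact Order.lt_succ_iff.mp this
  · rw [Cardinal.card_ord]
    calc (Order.succ κ) * (2:Cardinal.{u})^κ ≤ (2:Cardinal.{u})^κ * (2:Cardinal.{u})^κ :=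
      mul_le_mul' (Order.succ_le_of_lt (cantor κ)) le_rfl
      _ = (2:Cardinal.{u})^κ := S.two_power_mul_self

lemma stages_bound (S : Setup X κ n D) {ι : Type u} (hι : #ι ≤ κ)
    (g : ι → Ordinal.{u}) (hg : ∀ i, g i < (Order.succ κ).ord) :
    ∃ o, o < (Order.succ κ).ord ∧ ∀ i, g i ≤ o := by
  refine ⟨iSup g, ?_, fun i => Ordinal.le_iSup g i⟩
  refine Ordinal.iSup_lt_ord ?_ hg
  rw [(Cardinal.isRegular_succ S.hκ).cof_eq]
  exact hι.trans_lt (Order.lt_succ κ)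

lemma stage_subset_BigH (S : Setup X κ n D) (x₀ : X) {o : Ordinal.{u}}
    (ho : o < (Order.succ κ).ord) : Hseq D κ x₀ o ⊆ BigH D κ x₀ :=
  fun z hz => Set.mem_iUnion.mpr ⟨⟨o, ho⟩, hz⟩

lemma thetaCl_BigH (S : Setup X κ n D) (x₀ : X) :
    thetaCl (BigH D κ x₀) ⊆ BigH D κ x₀ := by
  intro x hx
  have hstage : ∀ W : D x, ∃ o, o < (Order.succ κ).ord ∧
      (W.1 ∩ Hseq D κ x₀ o).Nonempty := by
    intro W
    obtain ⟨y, hyW, hyH⟩ := S.mem_thetaCl_iff.mp hx W.1 W.2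
    obtain ⟨o, hyo⟩ := Set.mem_iUnion.mp hyH
    exact ⟨o.1, o.2, ⟨y, hyW, hyo⟩⟩
  choose g hg1 hg2 using hstage
  obtain ⟨o, ho, hle⟩ := S.stages_bound (S.hD1 x) g hg1
  have hxo : x ∈ thetaCl (Hseq D κ x₀ o) := by
    rw [S.mem_thetaCl_iff]
    intro W hW
    exact (hg2 ⟨W, hW⟩).mono
      (inter_subset_inter_right _ (Hseq_mono D κ x₀ (hle ⟨W, hW⟩)))
  have hnext : thetaCl (Hseq D κ x₀ o) ⊆ Hseq D κ x₀ (Order.succ o) := by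
    rw [Hseq_eq D κ x₀ (Order.succ o)]
    intro z hz
    refine Set.mem_union_left _ (Set.mem_union_right _ ?_)
    refine thetaCl_mono' ?_ hz
    intro w hw
    exact Set.mem_iUnion.mpr ⟨⟨o, Order.lt_succ o⟩, hw⟩
  have hsucc : Order.succ o < (Order.succ κ).ord :=
    (Cardinal.isSuccLimit_ord (S.hκ.trans (Order.le_succ κ))).succ_lt ho
  exact S.stage_subset_BigH x₀ hsucc (hnext hxo)

lemma witness_BigH (S : Setup X κ n D) (x₀ : X) (𝒲 : Set (Set X))
    (h1 : 𝒲 ⊆ ⋃ x ∈ BigH D κ x₀, D x) (h2 : #𝒲 ≤ κ) (h3 : ⋃₀ 𝒲 ≠ Set.univ) :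
    ∃ z ∈ BigH D κ x₀, z ∉ ⋃₀ 𝒲 := by
  classical
  have hstage : ∀ W : 𝒲, ∃ o, o < (Order.succ κ).ord ∧
      ∃ x ∈ Hseq D κ x₀ o, W.1 ∈ D x := by
    intro W
    obtain ⟨x, hxH, hWx⟩ := Set.mem_iUnion₂.mp (h1 W.2)
    obtain ⟨o, hxo⟩ := Set.mem_iUnion.mp hxH
    exact ⟨o.1, o.2, x, hxo, hWx⟩
  choose g hg1 hg2 using hstage
  obtain ⟨o, ho, hle⟩ := S.stages_bound h2 g hg1
  have h𝒲sub : 𝒲 ⊆ ⋃ x ∈ (⋃ o' : Set.Iio (Order.succ o), Hseq D κ x₀ o'.1), D x := by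
    intro W hW
    obtain ⟨x, hxo, hWx⟩ := hg2 ⟨W, hW⟩
    refine Set.mem_biUnion ?_ hWx
    refine Set.mem_iUnion.mpr ⟨⟨o, Order.lt_succ o⟩, ?_⟩
    exact Hseq_mono D κ x₀ (hle ⟨W, hW⟩) hxo
  have hwitmem : wit x₀ 𝒲 ∈ Hseq D κ x₀ (Order.succ o) := by
    rw [Hseq_eq D κ x₀ (Order.succ o)]
    exact Set.mem_union_right _ ⟨𝒲, ⟨h𝒲sub, h2⟩, rfl⟩
  have hsucc : Order.succ o < (Order.succ κ).ord :=
    (Cardinal.isSuccLimit_ord (S.hκ.trans (Order.le_succ κ))).succ_lt ho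
  exact ⟨wit x₀ 𝒲, S.stage_subset_BigH x₀ hsucc hwitmem, wit_spec x₀ h3⟩

lemma card_le (S : Setup X κ n D) (hne : Nonempty X) :
    Cardinal.mk X ≤ (2:Cardinal.{u}) ^ κ := by
  classical
  obtain ⟨x₀⟩ := hne
  set H := BigH D κ x₀ with hHdef
  have hsub : Set.univ ⊆ H := by
    by_contra hsub
    obtain ⟨q, -, hq⟩ := Set.not_subset.mp hsub
    -- step a: separate each point of H from q
    have stepa : ∀ x ∈ H, ∃ W ∈ D x, q ∉ W := by
      intro x hx
      have hsep : ∃ U : Set X, IsOpen U ∧ x ∈ U ∧ q ∉ closure U := by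
        by_contra hcon
        push_neg at hcon
        have hxq : x ∈ thetaCl ({q} : Set X) := by
          intro U hU hxU
          rw [Set.inter_singleton_nonempty]
          exact hcon U hU hxU
        have h1 : q ∈ thetaCl ({x} : Set X) := thetaCl_symm' hxq
        have h2 : q ∈ thetaCl H :=
          thetaCl_mono' (Set.singleton_subset_iff.mpr hx) h1
        exact hq (S.thetaCl_BigH x₀ h2)
      obtain ⟨U, hUo, hxU, hqU⟩ := hsep
      obtain ⟨W, hWD, hWcl⟩ := S.hD3 x U hUo hxU
      exact ⟨W, hWD, fun hmem => hqU (hWcl hmem)⟩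
    choose! Wsel hWsel1 hWsel2 using stepa
    -- step b: points outside H have neighborhoods with closure missing H
    have stepb : ∀ y, y ∉ H → ∃ G : Set X, IsOpen G ∧ y ∈ G ∧ closure G ∩ H = ∅ := by
      intro y hy
      have hyθ : y ∉ thetaCl H := fun hmem => hy (S.thetaCl_BigH x₀ hmem)
      simp only [thetaCl, Set.mem_setOf_eq] at hyθ
      push_neg at hyθ
      obtain ⟨G, hGo, hyG, hGcl⟩ := hyθ
      exact ⟨G, hGo, hyG, hGcl⟩
    choose! Gsel hG1 hG2 hG3 using stepb
    -- the open cover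
    set 𝒰 : Set (Set X) :=
      ((fun x => interior (Wsel x)) '' H) ∪ (Gsel '' Hᶜ) with h𝒰def
    have hopen : ∀ U ∈ 𝒰, IsOpen U := by
      rintro U (⟨x, hx, rfl⟩ | ⟨y, hy, rfl⟩)
      · exact isOpen_interior
      · exact hG1 y hy
    have hcover : ⋃₀ 𝒰 = Set.univ := by
      apply Set.eq_univ_of_forall
      intro z
      by_cases hz : z ∈ H
      · refine ⟨interior (Wsel z), Set.mem_union_left _ ⟨z, hz, rfl⟩, ?_⟩
        exact mem_interior_iff_mem_nhds.mpr (S.hD2 z (Wsel z) (hWsel1 z hz)).2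
      · exact ⟨Gsel z, Set.mem_union_right _ ⟨z, hz, rfl⟩, hG2 z hz⟩
    obtain ⟨𝒱, h𝒱sub, h𝒱card, h𝒱cov⟩ := S.haL 𝒰 hopen hcover
    -- select the corresponding closed neighborhoods
    set P : Set X → Prop := fun V => ∃ x, x ∈ H ∧ interior (Wsel x) = V with hPdef
    set g : Set X → Set X := fun V => if h : P V then Wsel h.choose else ∅ with hgdef
    have hg : ∀ V, P V → ∃ x, x ∈ H ∧ g V = Wsel x ∧ interior (Wsel x) = V := by
      intro V h
      refine ⟨h.choose, h.choose_spec.1, ?_, h.choose_spec.2⟩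
      simp only [hgdef, dif_pos h]
    set 𝒲 : Set (Set X) := g '' {V | V ∈ 𝒱 ∧ P V} with h𝒲def
    have h𝒲T : 𝒲 ⊆ ⋃ x ∈ H, D x := by
      rintro _ ⟨V, ⟨hV𝒱, hPV⟩, rfl⟩
      obtain ⟨x, hxH, hgV, -⟩ := hg V hPV
      rw [hgV]
      exact Set.mem_biUnion hxH (hWsel1 x hxH)
    have h𝒲card : #𝒲 ≤ κ := by
      refine mk_image_le.trans ?_
      exact (mk_le_mk_of_subset (fun V hV => hV.1)).trans h𝒱card
    have hq𝒲 : q ∉ ⋃₀ 𝒲 := by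
      rintro ⟨s, ⟨V, ⟨-, hPV⟩, rfl⟩, hqs⟩
      obtain ⟨x, hxH, hgV, -⟩ := hg V hPV
      rw [hgV] at hqs
      exact hWsel2 x hxH hqs
    have hne𝒲 : ⋃₀ 𝒲 ≠ Set.univ := fun he => hq𝒲 (he ▸ Set.mem_univ q)
    have hH𝒲 : H ⊆ ⋃₀ 𝒲 := by
      intro z hz
      have : z ∈ ⋃ V ∈ 𝒱, closure V := h𝒱cov ▸ Set.mem_univ z
      obtain ⟨V, hV𝒱, hzV⟩ := Set.mem_iUnion₂.mp this
      rcases h𝒱sub hV𝒱 with ⟨x, hxH, rfl⟩ | ⟨y, hy, rfl⟩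
      · have hPV : P (interior (Wsel x)) := ⟨x, hxH, rfl⟩
        obtain ⟨x', hx'H, hgV, hintV⟩ := hg _ hPV
        refine ⟨g (interior (Wsel x)), ⟨_, ⟨hV𝒱, hPV⟩, rfl⟩, ?_⟩
        rw [hgV]
        have hcl : closure (interior (Wsel x)) ⊆ Wsel x' := by
          rw [← hintV]
          calc closure (interior (Wsel x')) ⊆ closure (Wsel x') :=
            closure_mono interior_subset
            _ = Wsel x' := (S.hD2 x' (Wsel x') (hWsel1 x' hx'H)).1.closure_eq
        exact hcl hzV
      · exfalso
        have : z ∈ closure (Gsel y) ∩ H := ⟨hzV, hz⟩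
        rw [hG3 y hy] at this
        exact this
    obtain ⟨z, hzH, hz𝒲⟩ := S.witness_BigH x₀ 𝒲 h𝒲T h𝒲card hne𝒲
    exact hz𝒲 (hH𝒲 hzH)
  calc #X = #(Set.univ : Set X) := Cardinal.mk_univ.symm
    _ ≤ #H := mk_le_mk_of_subset hsub
    _ ≤ (2:Cardinal.{u}) ^ κ := S.mk_BigH_le x₀

end Setup


end AuxDev

theorem statement13 (X : Type u) [TopologicalSpace X]
    (h : UrysohnNumber X < ℵ₀) : #X ≤ 2 ^ (kappaInv X * aLdeg X) := by
  classical
  rcases isEmpty_or_nonempty X with hX | hX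
  · rw [Cardinal.mk_eq_zero X]
    exact zero_le
  -- the Urysohn number is attained
  have hUSne : {κ : Cardinal.{u} | ∀ A : Set X, κ ≤ #↥A → ∃ U : X → Set X,
      (∀ a ∈ A, IsOpen (U a) ∧ a ∈ U a) ∧ (⋂ a ∈ A, closure (U a)) = ∅}.Nonempty := by
    refine ⟨Order.succ #X, ?_⟩
    intro A hA
    have h2 : Order.succ #X ≤ #X := hA.trans (mk_set_le A)
    have h3 : #X < Order.succ #X := Order.lt_succ #X
    exact absurd h2 (not_le.mpr h3)
  have hmem : UrysohnNumber X ∈ {κ : Cardinal.{u} | ∀ A : Set X, κ ≤ #↥A →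
      ∃ U : X → Set X, (∀ a ∈ A, IsOpen (U a) ∧ a ∈ U a) ∧
      (⋂ a ∈ A, closure (U a)) = ∅} := csInf_mem hUSne
  obtain ⟨n, hn⟩ := Cardinal.lt_aleph0.mp h
  have hU : ∀ A : Set X, (n : Cardinal.{u}) ≤ #A → ∃ U : X → Set X,
      (∀ a ∈ A, IsOpen (U a) ∧ a ∈ U a) ∧ (⋂ a ∈ A, closure (U a)) = ∅ := by
    intro A hA
    exact hmem A (by rw [hn]; exact hA)
  have hn1 : 1 ≤ n := by
    by_contra hcon
    have hn0 : n = 0 := by omega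
    subst hn0
    obtain ⟨U, -, hU2⟩ := hU ∅ (by simp)
    have hempty : (⋂ a ∈ (∅ : Set X), closure (U a)) = Set.univ := by simp
    rw [hempty] at hU2
    exact (Set.univ_nonempty).ne_empty hU2
  -- kappaInv is attained
  have hKSne : {κ : Cardinal.{u} | ℵ₀ ≤ κ ∧ ∀ x : X, ∃ V : Set (Set X), #↥V ≤ κ ∧
      (∀ W ∈ V, IsClosed W ∧ W ∈ nhds x) ∧
      ∀ U : Set X, IsOpen U → x ∈ U → ∃ W ∈ V, W ⊆ closure U}.Nonempty := by
    refine ⟨max ℵ₀ #(Set X), le_max_left _ _, ?_⟩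
    intro x
    refine ⟨{W : Set X | IsClosed W ∧ W ∈ nhds x}, ?_, fun W hW => hW, ?_⟩
    · exact (mk_set_le _).trans (le_max_right _ _)
    · intro U hUo hxU
      exact ⟨closure U, ⟨isClosed_closure,
        Filter.mem_of_superset (hUo.mem_nhds hxU) subset_closure⟩, subset_rfl⟩
  have hkmem : kappaInv X ∈ {κ : Cardinal.{u} | ℵ₀ ≤ κ ∧ ∀ x : X,
      ∃ V : Set (Set X), #↥V ≤ κ ∧ (∀ W ∈ V, IsClosed W ∧ W ∈ nhds x) ∧
      ∀ U : Set X, IsOpen U → x ∈ U → ∃ W ∈ V, W ⊆ closure U} := csInf_mem hKSne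
  -- aLdeg is attained
  have hASne : {τ : Cardinal.{u} | ℵ₀ ≤ τ ∧ ∀ 𝒰 : Set (Set X),
      (∀ U ∈ 𝒰, IsOpen U) → ⋃₀ 𝒰 = Set.univ →
      ∃ 𝒱 ⊆ 𝒰, #↥𝒱 ≤ τ ∧ (⋃ V ∈ 𝒱, closure V) = Set.univ}.Nonempty := by
    refine ⟨max ℵ₀ #(Set X), le_max_left _ _, ?_⟩
    intro 𝒰 hop hcov
    refine ⟨𝒰, subset_rfl, ?_, ?_⟩
    · exact (mk_set_le _).trans (le_max_right _ _)
    · apply Set.eq_univ_of_univ_subset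
      rw [← hcov]
      intro z hz
      obtain ⟨U, hU𝒰, hzU⟩ := hz
      exact Set.mem_biUnion hU𝒰 (subset_closure hzU)
  have haLmem : aLdeg X ∈ {τ : Cardinal.{u} | ℵ₀ ≤ τ ∧ ∀ 𝒰 : Set (Set X),
      (∀ U ∈ 𝒰, IsOpen U) → ⋃₀ 𝒰 = Set.univ →
      ∃ 𝒱 ⊆ 𝒰, #↥𝒱 ≤ τ ∧ (⋃ V ∈ 𝒱, closure V) = Set.univ} := csInf_mem hASne
  -- the parameter κ
  set κ0 : Cardinal.{u} := kappaInv X * aLdeg X with hκ0def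
  have hkk : kappaInv X ≤ κ0 :=
    Cardinal.le_mul_right (fun h0 => by
      rw [h0] at haLmem
      exact (lt_irrefl (0:Cardinal.{u})) (lt_of_lt_of_le aleph0_pos haLmem.1))
  have hak : aLdeg X ≤ κ0 :=
    Cardinal.le_mul_left (fun h0 => by
      rw [h0] at hkmem
      exact (lt_irrefl (0:Cardinal.{u})) (lt_of_lt_of_le aleph0_pos hkmem.1))
  have hκ0 : ℵ₀ ≤ κ0 := hkmem.1.trans hkk
  -- build the directed families D
  choose Vf hV1 hV2 hV3 using hkmem.2
  set D : X → Set (Set X) := fun x =>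
    {W | ∃ S : Finset (Set X), ↑S ⊆ Vf x ∧ S.Nonempty ∧ W = ⋂₀ ↑S} with hDdef
  have hD1 : ∀ x, #(D x) ≤ κ0 := by
    intro x
    have hsub : D x ⊆ Set.range
        (fun S : {S : Finset (Set X) // ↑S ⊆ Vf x} => ⋂₀ (↑S.1 : Set (Set X))) := by
      rintro W ⟨S, hS, -, rfl⟩
      exact ⟨⟨S, hS⟩, rfl⟩
    refine (mk_le_mk_of_subset hsub).trans (mk_range_le.trans ?_)
    have hsurj : Function.Surjective
        (fun t : Finset ↥(Vf x) =>
          (⟨t.map (Function.Embedding.subtype _), by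
            intro w hw
            rw [Finset.coe_map] at hw
            obtain ⟨a, -, rfl⟩ := hw
            exact a.2⟩ : {S : Finset (Set X) // ↑S ⊆ Vf x})) := by
      rintro ⟨S, hS⟩
      refine ⟨S.subtype (· ∈ Vf x), ?_⟩
      apply Subtype.ext
      simp only
      exact Finset.subtype_map_of_mem (fun w hw => hS hw)
    refine (mk_le_of_surjective hsurj).trans ?_
    by_cases hfin : Finite ↥(Vf x)
    · haveI := hfin
      have h1 : #(Finset ↥(Vf x)) ≤ ℵ₀ := Cardinal.mk_le_aleph0
      exact h1.trans (hkmem.1.trans hkk)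
    · have : Infinite ↥(Vf x) := not_finite_iff_infinite.mp hfin
      rw [Cardinal.mk_finset_of_infinite]
      exact (hV1 x).trans hkk
  have hD2 : ∀ x, ∀ W ∈ D x, IsClosed W ∧ W ∈ nhds x := by
    rintro x W ⟨S, hS, -, rfl⟩
    constructor
    · exact isClosed_sInter (fun t ht => (hV2 x t (hS ht)).1)
    · exact (Filter.sInter_mem S.finite_toSet).mpr (fun t ht => (hV2 x t (hS ht)).2)
  have hD3 : ∀ x, ∀ U : Set X, IsOpen U → x ∈ U → ∃ W ∈ D x, W ⊆ closure U := by
    intro x U hUo hxU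
    obtain ⟨W, hWV, hWsub⟩ := hV3 x U hUo hxU
    refine ⟨W, ⟨{W}, ?_, ⟨W, Finset.mem_singleton_self W⟩, ?_⟩, hWsub⟩
    · rw [Finset.coe_singleton]
      exact Set.singleton_subset_iff.mpr hWV
    · rw [Finset.coe_singleton, Set.sInter_singleton]
  have hD4 : ∀ x, ∀ W1 ∈ D x, ∀ W2 ∈ D x, ∃ W3 ∈ D x, W3 ⊆ W1 ∩ W2 := by
    rintro x W1 ⟨S1, hS1, hS1ne, rfl⟩ W2 ⟨S2, hS2, -, rfl⟩
    refine ⟨⋂₀ ↑(S1 ∪ S2), ⟨S1 ∪ S2, ?_, hS1ne.inl, rfl⟩, ?_⟩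
    · rw [Finset.coe_union]
      exact Set.union_subset hS1 hS2
    · rw [Finset.coe_union, Set.sInter_union]
  have haL : ∀ 𝒰 : Set (Set X), (∀ U ∈ 𝒰, IsOpen U) → ⋃₀ 𝒰 = Set.univ →
      ∃ 𝒱 ⊆ 𝒰, #↥𝒱 ≤ κ0 ∧ (⋃ V ∈ 𝒱, closure V) = Set.univ := by
    intro 𝒰 hop hcov
    obtain ⟨𝒱, h1, h2, h3⟩ := haLmem.2 𝒰 hop hcov
    exact ⟨𝒱, h1, h2.trans hak, h3⟩
  have S : Setup X κ0 n D :=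
    ⟨hκ0, hn1, hU, hD1, hD2, hD3, hD4, haL⟩
  exact S.card_le hX
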